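/- Let n ≥ 1 be an integer and m a nonnegative integer, and set a := −m − 1/2, b := n + m + 1/2, c := n + 1/2. Then the hypergeometric series at 1 converges to zero: Σ_{k=0}^∞ (a)_k (b)_k / (k! (c)_k) = 0. Equivalently, the eigenfunction φ_{2m+1}(ρ) := F(−m − 1/2, n + m + 1/2, n + 1/2, ρ²) of the radial problem satisfies the boundary condition φ_{2m+1}(1) = 0. -/

import Mathlib

open Set Filter
open scoped Topology Real

/-- Pochhammer symbol `(d)_k = d(d+1)⋯(d+k−1)` over the reals. -/
noncomputable def poch (d : ℝ) (k : ℕ) : ℝ := Polynomial.eval d (ascPochhammer ℝ k)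

/-- The `k`-th coefficient `(a)_k (b)_k / (k! (c)_k)` of the Gauss hypergeometric series. -/
noncomputable def hypCoeff (a b c : ℝ) (k : ℕ) : ℝ :=
  poch a k * poch b k / ((k.factorial : ℝ) * poch c k)

/-- The Gauss hypergeometric series `F(a,b,c,x) = Σ_k ((a)_k (b)_k / (k! (c)_k)) x^k`. -/
noncomputable def hypF (a b c x : ℝ) : ℝ := ∑' k : ℕ, hypCoeff a b c k * x ^ k

/-- The first hypergeometric solution
`ψ₁(λ,ρ) = F((n−μ)/2, (n+μ)/2, n + 1/2, ρ²)` with `μ = √(n² + λ)`. -/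
noncomputable def psi1 (n : ℕ) (lam ρ : ℝ) : ℝ :=
  hypF (((n : ℝ) - Real.sqrt ((n : ℝ) ^ 2 + lam)) / 2)
    (((n : ℝ) + Real.sqrt ((n : ℝ) ^ 2 + lam)) / 2) ((n : ℝ) + 1 / 2) (ρ ^ 2)

/-- The second hypergeometric solution
`ψ₂(λ,ρ) = ρ^{1−2n} F((1−n−μ)/2, (1−n+μ)/2, 3/2 − n, ρ²)` with `μ = √(n² + λ)`. -/
noncomputable def psi2 (n : ℕ) (lam ρ : ℝ) : ℝ :=
  hypF ((1 - (n : ℝ) - Real.sqrt ((n : ℝ) ^ 2 + lam)) / 2)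
    ((1 - (n : ℝ) + Real.sqrt ((n : ℝ) ^ 2 + lam)) / 2) (3 / 2 - (n : ℝ)) (ρ ^ 2)
    / ρ ^ (2 * n - 1)

/-- The radial equation
`(1−ρ²)·φ''(ρ) + ((2n − (2n+1)ρ²)/ρ)·φ'(ρ) = −λ·φ(ρ)` at the point `ρ`. -/
def RadialEq (n : ℕ) (lam : ℝ) (φ : ℝ → ℝ) (ρ : ℝ) : Prop :=
  (1 - ρ ^ 2) * deriv (deriv φ) ρ
    + ((2 * (n : ℝ) - (2 * (n : ℝ) + 1) * ρ ^ 2) / ρ) * deriv φ ρ = -lam * φ ρ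

/-! ### Auxiliary lemmas -/

lemma poch_zero' (d : ℝ) : poch d 0 = 1 := by simp [poch]

lemma poch_succ' (d : ℝ) (k : ℕ) : poch d (k+1) = poch d k * (d + k) := by
  simpa [poch] using ascPochhammer_succ_eval k d

lemma poch_succ_left' (d : ℝ) (k : ℕ) : poch d (k+1) = d * poch (d+1) k := by
  simp [poch, ascPochhammer_succ_left, Polynomial.eval_comp]

lemma poch_eq_prod (d : ℝ) (k : ℕ) : poch d k = ∏ j ∈ Finset.range k, (d + j) := by
  induction k with
  | zero => simp [poch_zero']
  | succ k ih => rw [poch_succ', ih, Finset.prod_range_succ]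

lemma poch_pos {d : ℝ} (hd : 0 < d) (k : ℕ) : 0 < poch d k := by
  induction k with
  | zero => simp [poch_zero']
  | succ k ih => rw [poch_succ']; positivity

lemma poch_add (c : ℝ) (k m : ℕ) : poch c (k + m) = poch c k * poch (c + k) m := by
  have := ascPochhammer_mul ℝ k m
  have h := congrArg (Polynomial.eval c) this
  simpa [poch, Polynomial.eval_comp] using h.symm

/-- `(e)_N / N! → 0` as `N → ∞`, whenever `e < 1`. -/
lemma tendsto_poch_div_factorial {e : ℝ} (he : e < 1) :
    Tendsto (fun N : ℕ => poch e N / N.factorial) atTop (𝓝 0) := by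
  by_cases hint : ∃ j : ℕ, e = -j
  · obtain ⟨j, rfl⟩ := hint
    apply Tendsto.congr' _ (tendsto_const_nhds (x := (0:ℝ)))
    filter_upwards [eventually_ge_atTop (j+1)] with N hN
    rw [poch_eq_prod, Finset.prod_eq_zero (Finset.mem_range.mpr (by omega : j < N))
      (by ring), zero_div]
  · push_neg at hint
    have hΓ0 : Real.Gamma e ≠ 0 := Real.Gamma_ne_zero hint
    have hΓ := (Real.GammaSeq_tendsto_Gamma e).inv₀ hΓ0
    rw [← tendsto_add_atTop_iff_nat 1]
    have h1 : Tendsto (fun n : ℕ => (n:ℝ) ^ (e-1)) atTop (𝓝 0) := by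
      have := (tendsto_rpow_neg_atTop (y := 1 - e) (by linarith)).comp
        tendsto_natCast_atTop_atTop (α := ℕ)
      simpa [Function.comp_def, neg_sub] using this
    have h2 : Tendsto (fun n : ℕ => (n:ℝ) / ((n:ℝ)+1)) atTop (𝓝 1) := by
      have h0 : Tendsto (fun n : ℕ => 1 - 1/((n:ℝ)+1)) atTop (𝓝 (1 - 0)) :=
        tendsto_const_nhds.sub tendsto_one_div_add_atTop_nhds_zero_nat
      apply (by simpa using h0 : Tendsto (fun n : ℕ => 1 - 1/((n:ℝ)+1)) atTop (𝓝 1)).congr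
      intro n
      have : ((n:ℝ)+1) ≠ 0 := by positivity
      field_simp
      ring
    have hmain : Tendsto (fun n : ℕ => (n:ℝ)^(e-1) * ((n:ℝ)/((n:ℝ)+1)) * (Real.GammaSeq e n)⁻¹)
        atTop (𝓝 0) := by
      simpa using (h1.mul h2).mul hΓ
    apply hmain.congr'
    filter_upwards [eventually_ge_atTop 1] with n hn
    have hn0 : (0:ℝ) < n := by exact_mod_cast hn
    have hP : Real.GammaSeq e n = (n:ℝ) ^ e * n.factorial / poch e (n+1) := by
      rw [Real.GammaSeq, poch_eq_prod]
    have hfac : ((n+1).factorial : ℝ) = ((n:ℝ)+1) * n.factorial := by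
      rw [Nat.factorial_succ]; push_cast; ring
    rw [hP, inv_div, hfac]
    have hne : (n:ℝ)^e ≠ 0 := (Real.rpow_pos_of_pos hn0 e).ne'
    have hre : (n:ℝ)^(e-1) = (n:ℝ)^e / n := by
      rw [Real.rpow_sub hn0, Real.rpow_one]
    rw [hre]
    have hfne : (n.factorial : ℝ) ≠ 0 := by positivity
    field_simp

/-- Telescoping sum: `Σ_{k≤N} (a)_k / k! = (a+1)_N / N!`. -/
lemma sum_poch_div_factorial (a : ℝ) (N : ℕ) :
    ∑ k ∈ Finset.range (N+1), poch a k / k.factorial = poch (a+1) N / N.factorial := by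
  induction N with
  | zero => simp [poch_zero']
  | succ N ih =>
    rw [Finset.sum_range_succ, ih, poch_succ_left', poch_succ']
    have hfac : ((N+1).factorial : ℝ) = ((N:ℝ)+1) * N.factorial := by
      rw [Nat.factorial_succ]; push_cast; ring
    have hfne : (N.factorial : ℝ) ≠ 0 := by positivity
    rw [hfac]
    field_simp
    ring

/-- Partial sums of `(a)_k (c+k)_m / k!`. -/
noncomputable def Spar (a c : ℝ) (m N : ℕ) : ℝ :=
  ∑ k ∈ Finset.range N, poch a k * poch (c + k) m / k.factorial

lemma Spar_rec (a c : ℝ) (m N : ℕ) :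
    Spar a c (m+1) (N+1) = (c + m) * Spar a c m (N+1) + a * Spar (a+1) (c+1) m N := by
  unfold Spar
  have hterm : ∀ k : ℕ, poch a k * poch (c + k) (m+1) / k.factorial
      = (c + m) * (poch a k * poch (c + k) m / k.factorial)
        + (k:ℝ) * poch a k * poch (c + k) m / k.factorial := by
    intro k
    rw [poch_succ']
    have hfne : (k.factorial : ℝ) ≠ 0 := by positivity
    field_simp
    ring
  rw [Finset.sum_congr rfl fun k _ => hterm k, Finset.sum_add_distrib, ← Finset.mul_sum]
  congr 1
  rw [Finset.sum_range_succ']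
  simp only [Nat.cast_zero, zero_mul, zero_div, add_zero]
  rw [Finset.mul_sum]
  refine Finset.sum_congr rfl fun i _ => ?_
  have hfac : ((i+1).factorial : ℝ) = ((i:ℝ)+1) * i.factorial := by
    rw [Nat.factorial_succ]; push_cast; ring
  have hfne : (i.factorial : ℝ) ≠ 0 := by positivity
  have h1 : c + ((i:ℝ)+1) = (c+1) + i := by ring
  rw [poch_succ_left' a i, hfac]
  push_cast [h1]
  field_simp

lemma Spar_tendsto : ∀ (m : ℕ) (a c : ℝ), a + m < 0 → Tendsto (Spar a c m) atTop (𝓝 0) := by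
  intro m
  induction m with
  | zero =>
    intro a c ha
    simp only [Nat.cast_zero, add_zero] at ha
    rw [← tendsto_add_atTop_iff_nat 1]
    apply (tendsto_poch_div_factorial (by linarith : a + 1 < 1)).congr
    intro N
    rw [← sum_poch_div_factorial]
    unfold Spar
    exact Finset.sum_congr rfl fun k _ => by rw [poch_zero', mul_one]
  | succ m ih =>
    intro a c ha
    push_cast at ha
    have h1 := ih a c (by linarith)
    have h2 := ih (a+1) (c+1) (by linarith)
    rw [← tendsto_add_atTop_iff_nat 1]
    have h1' : Tendsto (fun N : ℕ => Spar a c m (N+1)) atTop (𝓝 0) := by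
      rw [tendsto_add_atTop_iff_nat 1]; exact h1
    have hco := (h1'.const_mul (c+(m:ℝ))).add (h2.const_mul a)
    have h0 : Tendsto (fun N : ℕ => (c+(m:ℝ)) * Spar a c m (N+1) + a * Spar (a+1) (c+1) m N)
        atTop (𝓝 0) := by simpa using hco
    exact h0.congr fun N => (Spar_rec a c m N).symm

/-- the hypergeometric series with parameters
`a = −m−1/2`, `b = n+m+1/2`, `c = n+1/2` sums to `0` at `x = 1`; equivalently,
the odd eigenfunction `φ_{2m+1}` satisfies the boundary condition
`φ_{2m+1}(1) = 0`. -/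
theorem eigenfunction_odd_boundary_value (n m : ℕ) (hn : 1 ≤ n) :
    (∑' k : ℕ,
        hypCoeff (-(m : ℝ) - 1 / 2) ((n : ℝ) + (m : ℝ) + 1 / 2)
          ((n : ℝ) + 1 / 2) k) = 0 := by
  set a : ℝ := -(m : ℝ) - 1/2 with ha_def
  set c : ℝ := (n : ℝ) + 1/2 with hc_def
  set b : ℝ := (n : ℝ) + (m : ℝ) + 1/2 with hb_def
  have hc0 : 0 < c := by positivity
  have hcm : 0 < poch c m := poch_pos hc0 m
  set f : ℕ → ℝ := fun k => hypCoeff a b c k with hf_def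
  -- partial sums of `f` tend to zero
  have hkey : ∀ k : ℕ, f k = (poch c m)⁻¹ * (poch a k * poch (c + k) m / k.factorial) := by
    intro k
    have hb' : b = c + (m : ℝ) := by rw [hb_def, hc_def]; ring
    have hid : poch c m * poch (c + m) k = poch c k * poch (c + k) m := by
      rw [← poch_add, ← poch_add, Nat.add_comm]
    have hck : (0:ℝ) < poch c k := poch_pos hc0 k
    have hfne : (k.factorial : ℝ) ≠ 0 := by positivity
    rw [hf_def]
    simp only [hypCoeff, hb']
    field_simp
    linear_combination (poch a k) * hid
  have hlim : Tendsto (fun N : ℕ => ∑ k ∈ Finset.range N, f k) atTop (𝓝 0) := by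
    have hS := (Spar_tendsto m a c (by rw [ha_def]; linarith)).const_mul (poch c m)⁻¹
    have h0 : Tendsto (fun N : ℕ => (poch c m)⁻¹ * Spar a c m N) atTop (𝓝 0) := by
      simpa using hS
    apply h0.congr
    intro N
    rw [Spar, Finset.mul_sum]
    exact Finset.sum_congr rfl fun k _ => (hkey k).symm
  by_cases hs : Summable f
  · exact tendsto_nhds_unique hs.hasSum.tendsto_sum_nat hlim
  · exact tsum_eq_zero_of_not_summable hs
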